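/- arXiv:1306.2024 — 2 statements merged into one kernel-verified Lean document; each statement's English description precedes it below -/
import Mathlib

section
/- For every integer s ≥ 1 there exists C > 0 such that for all φ ∈ 𝓢(ℝⁿ), all ψ ∈ 𝓢₀(ℝ), and all (u,b,a) ∈ 𝕊^{n-1}×ℝ×(0,∞): a^{−s} |R_ψ φ(u,b,a)| ≤ C ρ_{s+n+1}(φ) ρ_{s+2}(ψ). -/
open MeasureTheory Metric Filter Set
open scoped Real ComplexConjugate Manifold

noncomputable section

/-- Euclidean space ℝⁿ. -/
abbrev En (n : ℕ) := EuclideanSpace ℝ (Fin n)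

/-- The unit sphere 𝕊^{n-1} of ℝⁿ, as a subtype. -/
abbrev Sph (n : ℕ) := Metric.sphere (0 : En n) 1

/-- The surface measure on the sphere 𝕊^{n-1}. -/
def sphMeasure (n : ℕ) : Measure (Sph n) := (volume : Measure (En n)).toSphere

/-- 1D Fourier transform ĝ(ω) = ∫ g(x) e^{-i x ω} dx. -/
def FT1 (g : ℝ → ℂ) (ω : ℝ) : ℂ := ∫ x : ℝ, g x * Complex.exp (-(Complex.I * (x * ω : ℝ)))

/-- n-dimensional Fourier transform ĝ(w) = ∫ g(x) e^{-i x·w} dx. -/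
def FTn {n : ℕ} (g : En n → ℂ) (w : En n) : ℂ :=
  ∫ x : En n, g x * Complex.exp (-(Complex.I * (inner ℝ x w : ℝ)))

/-- The ridgelet ψ_{u,b,a}(x) = a⁻¹ ψ((x·u − b)/a). -/
def ridgelet {n : ℕ} (ψ : ℝ → ℂ) (u : Sph n) (b a : ℝ) (x : En n) : ℂ :=
  (a : ℂ)⁻¹ * ψ (((inner ℝ x (u : En n) : ℝ) - b) / a)

/-- The ridgelet transform R_ψ f(u,b,a) = ∫ f(x) conj(ψ_{u,b,a}(x)) dx. -/
def RT {n : ℕ} (ψ : ℝ → ℂ) (f : En n → ℂ) (u : Sph n) (b a : ℝ) : ℂ :=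
  ∫ x : En n, f x * conj (ridgelet ψ u b a x)

/-- K_{ψ,η} = (2π)^{n-1} ∫ conj(ψ̂(ω)) η̂(ω) |ω|^{-n} dω. -/
def Kconst (n : ℕ) (ψ η : ℝ → ℂ) : ℂ :=
  (((2 * π) ^ (n - 1) : ℝ) : ℂ) *
    ∫ ω : ℝ, conj (FT1 ψ ω) * FT1 η ω * ((|ω| ^ n : ℝ) : ℂ)⁻¹

/-- All moments vanish (Lizorkin condition on ℝ). -/
def Lizorkin1 (ψ : ℝ → ℂ) : Prop := ∀ m : ℕ, ∫ x : ℝ, (x : ℂ) ^ m * ψ x = 0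

/-- All moments vanish (Lizorkin condition on ℝⁿ). -/
def LizorkinN {n : ℕ} (φ : En n → ℂ) : Prop :=
  ∀ m : Fin n → ℕ, ∫ x : En n, (∏ i, (x i : ℂ) ^ m i) * φ x = 0

/-- The Radon transform Rf(u,p) = ∫_{u^⊥} f(pu + y) dy. -/
def Radon {n : ℕ} (f : En n → ℂ) (u : Sph n) (p : ℝ) : ℂ :=
  ∫ y : ((ℝ ∙ (u : En n))ᗮ : Submodule ℝ (En n)), f (p • (u : En n) + y)

/-- The 1D wavelet transform W_ψ g(b,a) = ∫ g(p) a⁻¹ conj(ψ((p−b)/a)) dp. -/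
def WT (ψ : ℝ → ℂ) (g : ℝ → ℂ) (b a : ℝ) : ℂ :=
  ∫ p : ℝ, g p * ((a : ℂ)⁻¹ * conj (ψ ((p - b) / a)))

/-- Rapid decay of a function Φ on 𝕊^{n-1}×ℝ×(0,∞) (arguments ordered (u,b,a)). -/
structure RapidDecay {n : ℕ} (Φ : Sph n → ℝ → ℝ → ℂ) : Prop where
  cont : ContinuousOn (fun q : Sph n × ℝ × ℝ => Φ q.1 q.2.1 q.2.2)
    (univ ×ˢ univ ×ˢ Ioi (0 : ℝ))
  decay : ∀ s r : ℕ, ∃ C : ℝ, ∀ (u : Sph n) (b : ℝ) (a : ℝ), 0 < a →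
    (a ^ s + (a ^ s)⁻¹) * (1 + b ^ 2) ^ ((r : ℝ) / 2) * ‖Φ u b a‖ ≤ C

/-- The ridgelet synthesis operator
R^t_ψ Φ(x) = ∫_{𝕊^{n-1}} ∫₀^∞ ∫_ℝ Φ(u,b,a) ψ_{u,b,a}(x) a^{−n} db da du. -/
def RTsynth {n : ℕ} (ψ : ℝ → ℂ) (Φ : Sph n → ℝ → ℝ → ℂ) (x : En n) : ℂ :=
  ∫ u : Sph n, (∫ a in Ioi (0:ℝ), (∫ b : ℝ, Φ u b a * ridgelet ψ u b a x * ((a ^ n : ℝ) : ℂ)⁻¹))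
    ∂(sphMeasure n)

/-- The seminorm ρ_ν(φ) = sup_{x, m ≤ ν} (1+|x|)^ν ‖∂^m φ(x)‖. -/
def rho {E : Type*} [NormedAddCommGroup E] [NormedSpace ℝ E] (ν : ℕ) (φ : E → ℂ) : ℝ :=
  ⨆ q : E × Fin (ν + 1), (1 + ‖q.1‖) ^ ν * ‖iteratedFDeriv ℝ q.2.1 φ q.1‖

open scoped ContDiff

/-! ### auxiliary lemmas -/

lemma coord_le_norm {ι : Type*} [Fintype ι] (w : EuclideanSpace ℝ ι) (j : ι) :
    |w j| ≤ ‖w‖ := by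
  rw [EuclideanSpace.norm_eq, ← Real.sqrt_sq_eq_abs]
  apply Real.sqrt_le_sqrt
  calc w j ^ 2 = ‖w j‖ ^ 2 := by rw [Real.norm_eq_abs, sq_abs]
    _ ≤ ∑ i : ι, ‖w i‖ ^ 2 :=
      Finset.single_le_sum (f := fun i => ‖w i‖ ^ 2) (fun i _ => by positivity) (Finset.mem_univ j)

lemma rho_nonneg {E : Type*} [NormedAddCommGroup E] [NormedSpace ℝ E] (ν : ℕ) (φ : E → ℂ) :
    0 ≤ rho ν φ :=
  Real.iSup_nonneg fun q => by positivity

lemma rho_bound {E : Type*} [NormedAddCommGroup E] [NormedSpace ℝ E]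
    (ν : ℕ) (φ : SchwartzMap E ℂ) {k : ℕ} (hk : k ≤ ν) (x : E) :
    (1 + ‖x‖) ^ ν * ‖iteratedFDeriv ℝ k (⇑φ) x‖ ≤ rho ν ⇑φ := by
  have hbdd : BddAbove (Set.range fun q : E × Fin (ν+1) =>
      (1 + ‖q.1‖) ^ ν * ‖iteratedFDeriv ℝ q.2.1 (⇑φ) q.1‖) := by
    refine ⟨2 ^ ν * (Finset.Iic ((ν : ℕ), (ν : ℕ))).sup
      (fun mm => SchwartzMap.seminorm ℝ mm.1 mm.2) φ, ?_⟩
    rintro r ⟨⟨y, i⟩, rfl⟩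
    exact SchwartzMap.one_add_le_sup_seminorm_apply (m := (ν, ν)) le_rfl
      (Nat.lt_succ_iff.mp i.isLt) φ y
  exact le_ciSup hbdd (x, ⟨k, Nat.lt_succ_of_le hk⟩)

lemma rho_decay {E : Type*} [NormedAddCommGroup E] [NormedSpace ℝ E]
    (ν : ℕ) (φ : SchwartzMap E ℂ) {k : ℕ} (hk : k ≤ ν) (x : E) :
    ‖iteratedFDeriv ℝ k (⇑φ) x‖ ≤ rho ν ⇑φ * ((1 + ‖x‖) ^ ν)⁻¹ := by
  have hpos : (0:ℝ) < (1 + ‖x‖) ^ ν := by positivity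
  rw [← div_eq_mul_inv, le_div_iff₀ hpos, mul_comm]
  exact rho_bound ν φ hk x

lemma rho_sup {E : Type*} [NormedAddCommGroup E] [NormedSpace ℝ E]
    (ν : ℕ) (φ : SchwartzMap E ℂ) (x : E) : ‖φ x‖ ≤ rho ν ⇑φ := by
  have h := rho_bound ν φ (Nat.zero_le ν) x
  rw [norm_iteratedFDeriv_zero] at h
  have h1 : (1:ℝ) ≤ (1 + ‖x‖) ^ ν := one_le_pow₀ (by linarith [norm_nonneg x])
  nlinarith [norm_nonneg (φ x)]

/-- directional derivative bound -/
lemma iteratedDeriv_line_bound {E : Type*} [NormedAddCommGroup E] [NormedSpace ℝ E]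
    (k : ℕ) (φ : E → ℂ) (hφ : ContDiff ℝ ∞ φ) (c v : E) (t : ℝ) :
    ‖iteratedDeriv k (fun r : ℝ => φ (c + r • v)) t‖
      ≤ ‖iteratedFDeriv ℝ k φ (c + t • v)‖ * ‖v‖ ^ k := by
  induction k generalizing φ with
  | zero =>
    simp [iteratedDeriv_zero, norm_iteratedFDeriv_zero]
  | succ k IH =>
    have hd : ∀ r : ℝ, HasDerivAt (fun r : ℝ => φ (c + r • v)) (fderiv ℝ φ (c + r • v) v) r := by
      intro r
      have h1 : HasDerivAt (fun r : ℝ => c + r • v) ((1:ℝ) • v) r :=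
        ((hasDerivAt_id r).smul_const v).const_add c
      rw [one_smul] at h1
      exact ((hφ.differentiable (by simp) (c + r • v)).hasFDerivAt).comp_hasDerivAt r h1
    have hder : deriv (fun r : ℝ => φ (c + r • v)) = fun r : ℝ => (fderiv ℝ φ (c + r • v)) v :=
      funext fun r => (hd r).deriv
    set A : (E →L[ℝ] ℂ) →L[ℝ] ℂ := ContinuousLinearMap.apply ℝ ℂ v with hA
    have hAnorm : ‖A‖ ≤ ‖v‖ := by
      apply ContinuousLinearMap.opNorm_le_bound _ (norm_nonneg v)
      intro g
      simpa [hA, mul_comm] using g.le_opNorm v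
    set φ₁ : E → ℂ := fun z => (fderiv ℝ φ z) v with hφ₁def
    have hφ' : ContDiff ℝ ∞ (fderiv ℝ φ) := hφ.fderiv_right (mod_cast le_top)
    have hφ₁ : ContDiff ℝ ∞ φ₁ := A.contDiff.comp hφ'
    have hcomp : φ₁ = A ∘ (fderiv ℝ φ) := rfl
    have step1 : ‖iteratedDeriv (k+1) (fun r : ℝ => φ (c + r • v)) t‖
        = ‖iteratedDeriv k (fun r : ℝ => φ₁ (c + r • v)) t‖ := by
      rw [iteratedDeriv_succ', hder]
    rw [step1]
    refine (IH φ₁ hφ₁).trans ?_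
    have hF : ‖iteratedFDeriv ℝ k φ₁ (c + t • v)‖
        ≤ ‖v‖ * ‖iteratedFDeriv ℝ (k+1) φ (c + t • v)‖ := by
      rw [hcomp, A.iteratedFDeriv_comp_left hφ'.contDiffAt (mod_cast le_top)]
      refine (ContinuousLinearMap.norm_compContinuousMultilinearMap_le _ _).trans ?_
      rw [norm_iteratedFDeriv_fderiv]
      exact mul_le_mul_of_nonneg_right hAnorm (norm_nonneg _)
    calc ‖iteratedFDeriv ℝ k φ₁ (c + t • v)‖ * ‖v‖ ^ k
        ≤ (‖v‖ * ‖iteratedFDeriv ℝ (k+1) φ (c + t • v)‖) * ‖v‖ ^ k := by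
          exact mul_le_mul_of_nonneg_right hF (by positivity)
      _ = ‖iteratedFDeriv ℝ (k+1) φ (c + t • v)‖ * ‖v‖ ^ (k+1) := by ring

/-- Taylor bound -/
lemma taylor_bound (s : ℕ) (H : ℝ → ℂ) (hH : ContDiff ℝ ∞ H) (K : ℝ)
    (hK : ∀ ξ : ℝ, ‖iteratedDeriv s H ξ‖ ≤ K) (t : ℝ) :
    ‖H t - ∑ k ∈ Finset.range s, ((t ^ k / k.factorial : ℝ)) • iteratedDeriv k H 0‖
      ≤ K * |t| ^ s := by
  induction s generalizing H t with
  | zero =>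
    simpa using hK t
  | succ s IH =>
    have hK0 : 0 ≤ K := le_trans (norm_nonneg _) (hK 0)
    have hH' : ContDiff ℝ ∞ (deriv H) := (contDiff_infty_iff_deriv.mp hH).2
    have hK' : ∀ ξ : ℝ, ‖iteratedDeriv s (deriv H) ξ‖ ≤ K := by
      intro ξ; rw [← iteratedDeriv_succ']; exact hK ξ
    have IH' := IH (deriv H) hH' hK'
    set P : ℝ → ℂ := fun r => ∑ k ∈ Finset.range (s+1),
      ((r ^ k / k.factorial : ℝ)) • iteratedDeriv k H 0 with hP
    set R : ℝ → ℂ := fun r => H r - P r with hR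
    have hR0 : R 0 = 0 := by
      simp only [hR, hP, Finset.sum_range_succ']
      simp [iteratedDeriv_zero]
    have hRd : ∀ r : ℝ, HasDerivAt R (deriv H r
        - ∑ k ∈ Finset.range s, ((r ^ k / k.factorial : ℝ)) • iteratedDeriv k (deriv H) 0) r := by
      intro r
      have hHd : HasDerivAt H (deriv H r) r :=
        (hH.differentiable (by simp) r).hasDerivAt
      have hPd : HasDerivAt P
          (∑ k ∈ Finset.range (s+1),
            ((k * r ^ (k-1) / k.factorial : ℝ)) • iteratedDeriv k H 0) r := by
        apply HasDerivAt.fun_sum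
        intro k _
        have : HasDerivAt (fun r : ℝ => (r ^ k / k.factorial : ℝ))
            ((k * r ^ (k-1) / k.factorial : ℝ)) r := by
          simpa [div_eq_mul_inv] using (hasDerivAt_pow k r).mul_const ((k.factorial : ℝ))⁻¹
        exact this.smul_const _
      have hsum : (∑ k ∈ Finset.range (s+1),
            ((k * r ^ (k-1) / k.factorial : ℝ)) • iteratedDeriv k H 0)
          = ∑ k ∈ Finset.range s, ((r ^ k / k.factorial : ℝ)) • iteratedDeriv k (deriv H) 0 := by
        rw [Finset.sum_range_succ']
        simp only [Nat.cast_zero, zero_mul, zero_div, zero_smul, add_zero]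
        refine Finset.sum_congr rfl ?_
        intro k _
        rw [← iteratedDeriv_succ']
        congr 1
        rw [Nat.factorial_succ]
        push_cast
        rw [mul_div_mul_left _ _ (by positivity : (0:ℝ) < (k:ℝ)+1).ne']
      rw [← hsum]
      exact hHd.sub hPd
    have key : ∀ ξ ∈ uIcc (0:ℝ) t, ‖deriv H ξ
        - ∑ k ∈ Finset.range s, ((ξ ^ k / k.factorial : ℝ)) • iteratedDeriv k (deriv H) 0‖
        ≤ K * |t| ^ s := by
      intro ξ hξ
      refine (IH' ξ).trans ?_
      have : |ξ| ≤ |t| := by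
        rcases le_total 0 t with h0 | h0
        · rw [uIcc_of_le h0, Set.mem_Icc] at hξ
          rw [abs_of_nonneg hξ.1, abs_of_nonneg h0]; exact hξ.2
        · rw [uIcc_of_ge h0, Set.mem_Icc] at hξ
          rw [abs_of_nonpos hξ.2, abs_of_nonpos h0]; exact neg_le_neg hξ.1
      gcongr
    have := Convex.norm_image_sub_le_of_norm_hasDerivWithin_le
      (f := R) (s := uIcc (0:ℝ) t) (C := K * |t| ^ s)
      (fun ξ hξ => (hRd ξ).hasDerivWithinAt) key (convex_uIcc 0 t)
      (left_mem_uIcc) (right_mem_uIcc)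
    rw [hR0, sub_zero] at this
    calc ‖R t‖ ≤ K * |t| ^ s * ‖t - 0‖ := by simpa using this
      _ = K * |t| ^ (s+1) := by rw [sub_zero, Real.norm_eq_abs]; ring

/-- 1D moment estimate -/
lemma oneD_est (s : ℕ) (ψ : SchwartzMap ℝ ℂ) (hψ : Lizorkin1 ⇑ψ)
    (H : ℝ → ℂ) (hH : ContDiff ℝ ∞ H) (B : ℝ) (hB : ∀ t, ‖H t‖ ≤ B)
    (K : ℝ) (hK : ∀ t : ℝ, ‖iteratedDeriv s H t‖ ≤ K) :
    ‖∫ t : ℝ, H t * conj (ψ t)‖ ≤ K * ∫ t : ℝ, ‖t‖ ^ s * ‖ψ t‖ := by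
  have hψcont : Continuous (fun t : ℝ => conj (ψ t)) := ψ.continuous.star
  have hint_k : ∀ k : ℕ, Integrable (fun t : ℝ => (t : ℂ) ^ k * conj (ψ t)) := by
    intro k
    refine (ψ.integrable_pow_mul volume k).mono' ?_ ?_
    · exact ((Complex.continuous_ofReal.pow k).mul hψcont).aestronglyMeasurable
    · refine ae_of_all _ fun t => ?_
      simp [Complex.norm_real, RCLike.norm_conj]
  have hmom : ∀ k : ℕ, ∫ t : ℝ, (t : ℂ) ^ k * conj (ψ t) = 0 := by
    intro k
    have hrw : (fun t : ℝ => (t : ℂ) ^ k * conj (ψ t))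
        = fun t : ℝ => conj ((t : ℂ) ^ k * ψ t) := by
      funext t
      rw [map_mul, map_pow, Complex.conj_ofReal]
    rw [hrw, integral_conj, hψ k, map_zero]
  have hintH : Integrable (fun t : ℝ => H t * conj (ψ t)) := by
    refine Integrable.bdd_mul ?_ hH.continuous.aestronglyMeasurable (ae_of_all _ hB)
    simpa using (hint_k 0)
  set P : ℝ → ℂ := fun t => ∑ k ∈ Finset.range s,
    ((t ^ k / k.factorial : ℝ)) • iteratedDeriv k H 0 with hPdef
  have hrwP : ∀ t : ℝ, P t * conj (ψ t) = ∑ k ∈ Finset.range s,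
      (((k.factorial : ℂ))⁻¹ * iteratedDeriv k H 0) * ((t : ℂ) ^ k * conj (ψ t)) := by
    intro t
    rw [hPdef, Finset.sum_mul]
    refine Finset.sum_congr rfl fun k _ => ?_
    rw [Complex.real_smul]
    push_cast
    ring
  have hintP : Integrable (fun t : ℝ => P t * conj (ψ t)) := by
    simp only [hrwP]
    exact integrable_finset_sum _ fun k _ => (hint_k k).const_mul _
  have hPzero : ∫ t : ℝ, P t * conj (ψ t) = 0 := by
    simp only [hrwP]
    rw [integral_finset_sum _ fun k _ => (hint_k k).const_mul _]
    refine Finset.sum_eq_zero fun k _ => ?_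
    rw [integral_const_mul, hmom k, mul_zero]
  have hsplit : ∫ t : ℝ, H t * conj (ψ t) = ∫ t : ℝ, (H t - P t) * conj (ψ t) := by
    have : ∫ t : ℝ, (H t - P t) * conj (ψ t)
        = (∫ t : ℝ, H t * conj (ψ t)) - ∫ t : ℝ, P t * conj (ψ t) := by
      simp only [sub_mul]
      exact integral_sub hintH hintP
    rw [this, hPzero, sub_zero]
  rw [hsplit]
  refine (norm_integral_le_integral_norm _).trans ?_
  have hpt : ∀ t : ℝ, ‖(H t - P t) * conj (ψ t)‖ ≤ K * (‖t‖ ^ s * ‖ψ t‖) := by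
    intro t
    rw [norm_mul, RCLike.norm_conj]
    have h1 : ‖H t - P t‖ ≤ K * |t| ^ s := taylor_bound s H hH K hK t
    calc ‖H t - P t‖ * ‖ψ t‖ ≤ (K * |t| ^ s) * ‖ψ t‖ :=
          mul_le_mul_of_nonneg_right h1 (norm_nonneg _)
      _ = K * (‖t‖ ^ s * ‖ψ t‖) := by rw [Real.norm_eq_abs]; ring
  refine le_trans (integral_mono_of_nonneg (ae_of_all _ fun t => norm_nonneg _)
    ((ψ.integrable_pow_mul volume s).const_mul K) (ae_of_all _ hpt)) ?_
  rw [integral_const_mul]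

/-- Measure-preserving parametrization of ℝⁿ adapted to a unit vector. -/
lemma exists_adapted_equiv (m : ℕ) (u : Sph (m+1)) :
    ∃ T : (ℝ × (Fin m → ℝ)) ≃ᵐ En (m+1),
      MeasurePreserving T volume volume ∧
      (∀ z : ℝ × (Fin m → ℝ), (inner ℝ (T z) (u : En (m+1)) : ℝ) = z.1) ∧
      (∀ (p : ℝ) (y : Fin m → ℝ), T (p, y) = p • (u : En (m+1)) + T (0, y)) ∧
      (∀ (p : ℝ) (y : Fin m → ℝ), ‖y‖ ≤ ‖T (p, y)‖) := by
  have hu1 : ‖(u : En (m+1))‖ = 1 := by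
    simpa using mem_sphere_zero_iff_norm.mp u.2
  obtain ⟨B, hB0⟩ : ∃ B : OrthonormalBasis (Fin (m+1)) ℝ (En (m+1)), B 0 = (u : En (m+1)) := by
    have card : Module.finrank ℝ (En (m+1)) = Fintype.card (Fin (m+1)) := by
      simp [finrank_euclideanSpace_fin]
    have hv : Orthonormal ℝ (Set.restrict {(0 : Fin (m+1))}
        (fun _ : Fin (m+1) => (u : En (m+1)))) := by
      constructor
      · intro i; exact hu1
      · intro i j hij
        exfalso
        apply hij
        apply Subtype.ext
        have hi := i.2; have hj := j.2
        simp only [Set.mem_singleton_iff] at hi hj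
        rw [hi, hj]
    obtain ⟨B, hB⟩ := hv.exists_orthonormalBasis_extension_of_card_eq card
    exact ⟨B, hB 0 rfl⟩
  let e3 : (Fin (m+1) → ℝ) ≃ᵐ ℝ × (Fin m → ℝ) :=
    MeasurableEquiv.piFinSuccAbove (fun _ => ℝ) 0
  let T : (ℝ × (Fin m → ℝ)) ≃ᵐ En (m+1) :=
    (e3.symm.trans (MeasurableEquiv.toLp 2 (Fin (m+1) → ℝ))).trans
      B.measurableEquiv.symm
  have hTcoe : ∀ z : ℝ × (Fin m → ℝ),
      T z = B.repr.symm ((WithLp.equiv 2 _).symm (Fin.cons z.1 z.2)) := by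
    intro z
    show B.measurableEquiv.symm ((MeasurableEquiv.toLp 2 (Fin (m+1) → ℝ)) (e3.symm z)) = _
    have h3 : e3.symm z = Fin.cons z.1 z.2 := by
      show (MeasurableEquiv.piFinSuccAbove (fun _ => ℝ) 0).symm z = Fin.cons z.1 z.2
      rw [MeasurableEquiv.piFinSuccAbove_symm_apply]
      exact Fin.insertNth_zero' z.1 z.2
    rw [h3]
    rfl
  have hT : MeasurePreserving T volume volume := by
    have h1 := B.measurePreserving_measurableEquiv.symm
    have h2 := (EuclideanSpace.volume_preserving_symm_measurableEquiv_toLp (Fin (m+1))).symm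
    have h3 := (volume_preserving_piFinSuccAbove (fun _ : Fin (m+1) => ℝ) 0).symm
    exact h1.comp (h2.comp h3)
  refine ⟨T, hT, ?_, ?_, ?_⟩
  · intro z
    have h1 : (inner ℝ (T z) (u : En (m+1)) : ℝ) = B.repr (T z) 0 := by
      rw [← hB0, OrthonormalBasis.repr_apply_apply, real_inner_comm]
    rw [h1, hTcoe z, LinearIsometryEquiv.apply_symm_apply]
    show (Fin.cons z.1 z.2 : Fin (m+1) → ℝ) 0 = z.1
    simp
  · intro p y
    rw [hTcoe (p, y), hTcoe (0, y)]
    have hcons : (Fin.cons p y : Fin (m+1) → ℝ)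
        = p • (Pi.single (0 : Fin (m+1)) (1:ℝ) : Fin (m+1) → ℝ)
          + (Fin.cons (0:ℝ) y : Fin (m+1) → ℝ) := by
      funext j
      refine Fin.cases ?_ ?_ j
      · simp
      · intro i
        simp [Fin.cons_succ, Pi.single_eq_of_ne (Fin.succ_ne_zero i)]
    show B.repr.symm ((WithLp.equiv 2 _).symm (Fin.cons p y)) = _
    rw [hcons]
    have hsplit : ((WithLp.equiv 2 (Fin (m+1) → ℝ)).symm
        (p • (Pi.single (0 : Fin (m+1)) (1:ℝ) : Fin (m+1) → ℝ)
          + (Fin.cons (0:ℝ) y : Fin (m+1) → ℝ)))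
      = p • (WithLp.equiv 2 (Fin (m+1) → ℝ)).symm
          (Pi.single (0 : Fin (m+1)) (1:ℝ) : Fin (m+1) → ℝ)
        + (WithLp.equiv 2 (Fin (m+1) → ℝ)).symm (Fin.cons (0:ℝ) y : Fin (m+1) → ℝ) := rfl
    rw [hsplit, map_add, _root_.map_smul, WithLp.equiv_symm_apply, EuclideanSpace.toLp_single,
      OrthonormalBasis.repr_symm_single, hB0]
  · intro p y
    rw [hTcoe (p, y), LinearIsometryEquiv.norm_map]
    set w : EuclideanSpace ℝ (Fin (m+1)) := (WithLp.equiv 2 _).symm (Fin.cons p y) with hw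
    refine (pi_norm_le_iff_of_nonneg (norm_nonneg w)).mpr ?_
    intro i
    have : y i = w i.succ := by
      rw [hw]
      show y i = (Fin.cons p y : Fin (m+1) → ℝ) i.succ
      simp
    rw [Real.norm_eq_abs, this]
    exact coord_le_norm w i.succ

lemma subst_scale (b : ℝ) {a : ℝ} (ha : 0 < a) (g : ℝ → ℂ) :
    ∫ p : ℝ, g p = a • ∫ t : ℝ, g (b + a * t) := by
  have h1 : (fun t : ℝ => g (b + a * t)) = fun t : ℝ => (fun q : ℝ => g (b + q)) (a • t) := by
    funext t; simp [smul_eq_mul]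
  rw [h1, Measure.integral_comp_smul volume (fun q : ℝ => g (b + q)) a,
    integral_add_left_eq_self (fun q : ℝ => g q) b]
  have h2 : |(a ^ Module.finrank ℝ ℝ)⁻¹| = a⁻¹ := by
    rw [Module.finrank_self, pow_one]
    exact abs_of_pos (inv_pos.mpr ha)
  rw [h2, smul_smul, mul_inv_cancel₀ ha.ne', one_smul]

/-- for s ≥ 1 there is C > 0 with
a^{−s} |R_ψφ(u,b,a)| ≤ C ρ_{s+n+1}(φ) ρ_{s+2}(ψ) for φ ∈ 𝓢(ℝⁿ) and ψ ∈ 𝓢₀(ℝ). -/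
theorem ridgelet_small_scale_estimate
    (n : ℕ) (hn : 2 ≤ n) (s : ℕ) (hs : 1 ≤ s) :
    ∃ C : ℝ, 0 < C ∧
      ∀ (φ : SchwartzMap (En n) ℂ) (ψ : SchwartzMap ℝ ℂ), Lizorkin1 ⇑ψ →
      ∀ (u : Sph n) (b a : ℝ), 0 < a →
        (a ^ s)⁻¹ * ‖RT ⇑ψ ⇑φ u b a‖ ≤ C * rho (s + n + 1) ⇑φ * rho (s + 2) ⇑ψ := by
  obtain ⟨m, rfl⟩ : ∃ m, n = m + 1 := ⟨n - 1, by omega⟩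
  have hIw_int : Integrable (fun t : ℝ => (1 + ‖t‖) ^ (-(2:ℝ))) volume := by
    apply integrable_one_add_norm
    norm_num
  have hIy_int : Integrable (fun y : Fin m → ℝ => (1 + ‖y‖) ^ (-((m:ℝ) + 1))) volume := by
    apply integrable_one_add_norm
    rw [Module.finrank_fin_fun]
    linarith
  set Iw : ℝ := ∫ t : ℝ, (1 + ‖t‖) ^ (-(2:ℝ)) with hIwdef
  set Iy : ℝ := ∫ y : Fin m → ℝ, (1 + ‖y‖) ^ (-((m:ℝ) + 1)) with hIydef
  have hIw0 : 0 ≤ Iw := integral_nonneg fun t => Real.rpow_nonneg (by positivity) _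
  have hIy0 : 0 ≤ Iy := integral_nonneg fun y => Real.rpow_nonneg (by positivity) _
  refine ⟨Iw * Iy + 1, by nlinarith, ?_⟩
  intro φ ψ hψL u b a ha
  set ρφ := rho (s + (m+1) + 1) ⇑φ with hρφdef
  set ρψ := rho (s + 2) ⇑ψ with hρψdef
  have hρφ0 : 0 ≤ ρφ := rho_nonneg _ _
  have hρψ0 : 0 ≤ ρψ := rho_nonneg _ _
  have hu1 : ‖(u : En (m+1))‖ = 1 := by
    simpa using mem_sphere_zero_iff_norm.mp u.2
  obtain ⟨T, hT, hTin, hTlin, hTnorm⟩ := exists_adapted_equiv m u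
  -- ψ moment integral bound
  have hψdecay : ∀ t : ℝ, ‖ψ t‖ ≤ ρψ * ((1 + ‖t‖) ^ (s+2))⁻¹ := by
    intro t
    have := rho_decay (s+2) ψ (k := 0) (Nat.zero_le _) t
    rwa [norm_iteratedFDeriv_zero] at this
  have hψmom : ∫ t : ℝ, ‖t‖ ^ s * ‖ψ t‖ ≤ ρψ * Iw := by
    have hpt : ∀ t : ℝ, ‖t‖ ^ s * ‖ψ t‖ ≤ ρψ * (1 + ‖t‖) ^ (-(2:ℝ)) := by
      intro t
      have h2 : ((1:ℝ) + ‖t‖) ^ (-(2:ℝ)) = (((1 + ‖t‖) ^ (2:ℕ)))⁻¹ := by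
        rw [← Real.rpow_natCast (1 + ‖t‖) 2, ← Real.rpow_neg (by positivity)]
        norm_num
      rw [h2]
      calc ‖t‖ ^ s * ‖ψ t‖ ≤ ‖t‖ ^ s * (ρψ * ((1 + ‖t‖) ^ (s+2))⁻¹) := by
            exact mul_le_mul_of_nonneg_left (hψdecay t) (by positivity)
        _ = ρψ * (‖t‖ ^ s * ((1 + ‖t‖) ^ (s+2))⁻¹) := by ring
        _ ≤ ρψ * (((1 + ‖t‖) ^ (2:ℕ)))⁻¹ := by
            refine mul_le_mul_of_nonneg_left ?_ hρψ0
            have h1 : ‖t‖ ^ s ≤ (1 + ‖t‖) ^ s :=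
              pow_le_pow_left₀ (norm_nonneg t) (by linarith [norm_nonneg t]) s
            calc ‖t‖ ^ s * ((1 + ‖t‖) ^ (s+2))⁻¹
                ≤ (1 + ‖t‖) ^ s * ((1 + ‖t‖) ^ (s+2))⁻¹ := by
                  exact mul_le_mul_of_nonneg_right h1 (by positivity)
              _ = (((1 + ‖t‖) ^ (2:ℕ)))⁻¹ := by
                  rw [pow_add, mul_inv, ← mul_assoc,
                    mul_inv_cancel₀ (by positivity : ((1:ℝ) + ‖t‖) ^ s ≠ 0), one_mul]
    refine le_trans (integral_mono_of_nonneg (ae_of_all _ fun t => by positivity)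
      (hIw_int.const_mul ρψ) (ae_of_all _ hpt)) ?_
    rw [integral_const_mul]
  -- the inner (1D) estimate
  have hinner_est : ∀ y : Fin m → ℝ,
      ‖∫ p : ℝ, φ (T (p, y)) * conj ((a:ℂ)⁻¹ * ψ ((p - b) / a))‖
        ≤ a ^ s * (ρφ * ρψ * Iw) * ((1 + ‖y‖) ^ (m+1))⁻¹ := by
    intro y
    set cy : En (m+1) := T (0, y) with hcy
    set v : En (m+1) := a • (u : En (m+1)) with hv
    set c : En (m+1) := cy + b • (u : En (m+1)) with hc
    have hTbat : ∀ t : ℝ, T (b + a * t, y) = c + t • v := by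
      intro t
      rw [hTlin (b + a * t) y, ← hcy, hc, hv]
      module
    set H : ℝ → ℂ := fun t => φ (c + t • v) with hH
    have hH_smooth : ContDiff ℝ ∞ H := by
      apply φ.smooth'.comp
      exact contDiff_const.add (contDiff_id.smul contDiff_const)
    have hHB : ∀ t, ‖H t‖ ≤ ρφ := fun t => rho_sup _ φ _
    set K : ℝ := a ^ s * (ρφ * ((1 + ‖y‖) ^ (m+1))⁻¹) with hKdef
    have hyx : ∀ t : ℝ, ((1 + ‖y‖) ^ (m+1))⁻¹ ≥ (((1 + ‖c + t • v‖) ^ (s+(m+1)+1)))⁻¹ := by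
      intro t
      have hn1 : ‖y‖ ≤ ‖c + t • v‖ := by
        rw [← hTbat t]; exact hTnorm (b + a * t) y
      refine inv_anti₀ (by positivity) ?_
      calc (1 + ‖y‖) ^ (m+1) ≤ (1 + ‖c + t • v‖) ^ (m+1) := by
            exact pow_le_pow_left₀ (by positivity) (by linarith) _
        _ ≤ (1 + ‖c + t • v‖) ^ (s+(m+1)+1) :=
            pow_le_pow_right₀ (by linarith [norm_nonneg (c + t • v)]) (by omega)
    have hK : ∀ t : ℝ, ‖iteratedDeriv s H t‖ ≤ K := by
      intro t
      refine (iteratedDeriv_line_bound s (⇑φ) φ.smooth' c v t).trans ?_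
      have hnv : ‖v‖ = a := by
        rw [hv, norm_smul, hu1, mul_one, Real.norm_eq_abs, abs_of_pos ha]
      have h1 : ‖iteratedFDeriv ℝ s (⇑φ) (c + t • v)‖
          ≤ ρφ * (((1 + ‖c + t • v‖) ^ (s+(m+1)+1)))⁻¹ :=
        rho_decay _ φ (by omega) _
      calc ‖iteratedFDeriv ℝ s (⇑φ) (c + t • v)‖ * ‖v‖ ^ s
          ≤ (ρφ * ((1 + ‖y‖) ^ (m+1))⁻¹) * a ^ s := by
            rw [hnv]
            refine mul_le_mul_of_nonneg_right (h1.trans ?_) (by positivity)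
            exact mul_le_mul_of_nonneg_left (hyx t) hρφ0
        _ = K := by rw [hKdef]; ring
    have h1D := oneD_est s ψ hψL H hH_smooth ρφ hHB K hK
    -- substitution
    have hptwise : (fun p : ℝ => φ (T (p, y)) * conj ((a:ℂ)⁻¹ * ψ ((p - b) / a)))
        = fun p : ℝ => (a:ℂ)⁻¹ * (φ (T (p, y)) * conj (ψ ((p - b) / a))) := by
      funext p
      rw [map_mul]
      have : conj ((a:ℂ)⁻¹) = (a:ℂ)⁻¹ := by
        rw [map_inv₀, Complex.conj_ofReal]
      rw [this]; ring
    rw [hptwise, integral_const_mul]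
    have hsub := subst_scale b ha (fun p : ℝ => φ (T (p, y)) * conj (ψ ((p - b) / a)))
    have hGb : ∀ t : ℝ, φ (T (b + a * t, y)) * conj (ψ ((b + a * t - b) / a))
        = H t * conj (ψ t) := by
      intro t
      rw [hTbat t, add_sub_cancel_left, mul_div_cancel_left₀ t ha.ne']
    simp only [hGb] at hsub
    rw [hsub]
    rw [norm_mul, norm_smul]
    have hna : ‖(a:ℂ)⁻¹‖ = a⁻¹ := by
      rw [norm_inv, Complex.norm_real, Real.norm_eq_abs, abs_of_pos ha]
    rw [hna, Real.norm_eq_abs, abs_of_pos ha]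
    calc a⁻¹ * (a * ‖∫ t : ℝ, H t * conj (ψ t)‖)
        = ‖∫ t : ℝ, H t * conj (ψ t)‖ := by
          field_simp
      _ ≤ K * ∫ t : ℝ, ‖t‖ ^ s * ‖ψ t‖ := h1D
      _ ≤ K * (ρψ * Iw) := by
          refine mul_le_mul_of_nonneg_left hψmom ?_
          rw [hKdef]; positivity
      _ = a ^ s * (ρφ * ρψ * Iw) * ((1 + ‖y‖) ^ (m+1))⁻¹ := by
          rw [hKdef]; ring
  -- the global estimate
  set Fz : ℝ × (Fin m → ℝ) → ℂ :=
    fun z => φ (T z) * conj ((a:ℂ)⁻¹ * ψ ((z.1 - b) / a)) with hFzdef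
  have hcbound : ∀ z : ℝ × (Fin m → ℝ), ‖conj ((a:ℂ)⁻¹ * ψ ((z.1 - b) / a))‖ ≤ a⁻¹ * ρψ := by
    intro z
    rw [RCLike.norm_conj, norm_mul, norm_inv, Complex.norm_real, Real.norm_eq_abs,
      abs_of_pos ha]
    exact mul_le_mul_of_nonneg_left (rho_sup _ ψ _) (by positivity)
  have hFint : Integrable Fz volume := by
    have hφT : Integrable (fun z : ℝ × (Fin m → ℝ) => φ (T z)) volume :=
      (hT.integrable_comp_emb T.measurableEmbedding).mpr φ.integrable
    have hcmeas : AEStronglyMeasurable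
        (fun z : ℝ × (Fin m → ℝ) => conj ((a:ℂ)⁻¹ * ψ ((z.1 - b) / a))) volume := by
      refine Continuous.aestronglyMeasurable ?_
      exact (continuous_const.mul (ψ.continuous.comp
        ((continuous_fst.sub continuous_const).div_const a))).star
    have := Integrable.bdd_mul hφT hcmeas (ae_of_all _ hcbound)
    refine this.congr (ae_of_all _ fun z => ?_)
    rw [hFzdef]; ring
  have hRT : RT ⇑ψ ⇑φ u b a = ∫ z : ℝ × (Fin m → ℝ), Fz z := by
    rw [RT, ← hT.integral_comp' (fun x : En (m+1) => φ x * conj (ridgelet ⇑ψ u b a x))]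
    refine integral_congr_ae (ae_of_all _ fun z => ?_)
    rw [hFzdef]
    simp only [ridgelet, hTin z]
  have hsplit : ∫ z : ℝ × (Fin m → ℝ), Fz z
      = ∫ y : Fin m → ℝ, ∫ p : ℝ, Fz (p, y) := by
    rw [Measure.volume_eq_prod] at hFint ⊢
    exact integral_prod_symm Fz hFint
  have houter : ‖RT ⇑ψ ⇑φ u b a‖ ≤ a ^ s * (ρφ * ρψ * Iw * Iy) := by
    rw [hRT, hsplit]
    refine (norm_integral_le_integral_norm _).trans ?_
    have hptw : ∀ y : Fin m → ℝ, ‖∫ p : ℝ, Fz (p, y)‖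
        ≤ a ^ s * (ρφ * ρψ * Iw) * (1 + ‖y‖) ^ (-((m:ℝ) + 1)) := by
      intro y
      have h2 : ((1:ℝ) + ‖y‖) ^ (-((m:ℝ) + 1)) = (((1 + ‖y‖) ^ (m+1:ℕ)))⁻¹ := by
        rw [← Real.rpow_natCast (1 + ‖y‖) (m+1), ← Real.rpow_neg (by positivity)]
        push_cast
        norm_num
      rw [h2]
      exact hinner_est y
    refine le_trans (integral_mono_of_nonneg (ae_of_all _ fun y => norm_nonneg _)
      ((hIy_int.const_mul _)) (ae_of_all _ hptw)) ?_
    rw [integral_const_mul, ← hIydef]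
    ring_nf
    rfl
  have hfinal : (a ^ s)⁻¹ * ‖RT ⇑ψ ⇑φ u b a‖ ≤ Iw * Iy * (ρφ * ρψ) := by
    have hpow : (0:ℝ) < a ^ s := by positivity
    calc (a ^ s)⁻¹ * ‖RT ⇑ψ ⇑φ u b a‖
        ≤ (a ^ s)⁻¹ * (a ^ s * (ρφ * ρψ * Iw * Iy)) := by
          exact mul_le_mul_of_nonneg_left houter (by positivity)
      _ = Iw * Iy * (ρφ * ρψ) := by
          field_simp
  refine hfinal.trans ?_
  have : 0 ≤ ρφ * ρψ := mul_nonneg hρφ0 hρψ0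
  nlinarith
end
end

section
/- Let ψ ∈ 𝓢(ℝ) and let Φ : 𝕊^{n-1}×ℝ×(0,∞) → ℂ have rapid decay. Then for every x ∈ ℝⁿ, R^t_ψ Φ(x) = (1/(2π)) ∫_{𝕊^{n-1}} ∫₀^∞ ∫_ℝ e^{i ω (u·x)} · Φ̂(u,ω,a) · ψ̂(a ω) · a^{−n} dω da du, where Φ̂(u,ω,a) = ∫_ℝ Φ(u,b,a) e^{−i b ω} db denotes the Fourier transform of Φ in the variable b. -/
open MeasureTheory Metric Filter Set
open scoped Real ComplexConjugate Manifold

noncomputable section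

section Helpers
open FourierTransform

lemma FT1_eq_fourierIntegral (g : ℝ → ℂ) (ω : ℝ) :
    FT1 g ω = 𝓕 g (ω / (2 * π)) := by
  rw [FT1, Real.fourier_real_eq_integral_exp_smul]
  refine integral_congr_ae (.of_forall fun x => ?_)
  simp only [smul_eq_mul]
  rw [mul_comm]
  congr 1
  have h : -2 * π * x * (ω / (2 * π)) = -(x * ω) := by
    field_simp
  rw [h]
  push_cast
  ring

lemma schwartz_fourier_inversion' (ψ : SchwartzMap ℝ ℂ) (s : ℝ) :
    ∫ w : ℝ, Complex.exp (((2 * π * (w * s) : ℝ) : ℂ) * Complex.I) • 𝓕 (⇑ψ) w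
      = ψ s := by
  have h1 : Integrable (𝓕 (⇑ψ)) := by
    simpa [SchwartzMap.fourier_coe] using (SchwartzMap.fourierTransformCLM ℂ ψ).integrable
  have h2 := congrFun (ψ.continuous.fourierInv_fourier_eq ψ.integrable h1) s
  rw [Real.fourierInv_eq'] at h2
  simpa [mul_comm] using h2

lemma FT1_schwartz_continuous (ψ : SchwartzMap ℝ ℂ) : Continuous (FT1 ⇑ψ) := by
  have h : FT1 ⇑ψ = fun ω => 𝓕 (⇑ψ) (ω / (2 * π)) :=
    funext (FT1_eq_fourierIntegral _)
  rw [h]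
  have hc : Continuous (𝓕 (⇑ψ)) := by
    simpa [SchwartzMap.fourier_coe] using (SchwartzMap.fourierTransformCLM ℂ ψ).continuous
  exact hc.comp (by continuity)

lemma FT1_schwartz_scaled_integrable (ψ : SchwartzMap ℝ ℂ) {a : ℝ} (ha : 0 < a) :
    Integrable (fun ω : ℝ => FT1 ⇑ψ (a * ω)) := by
  have h1 : Integrable (𝓕 (⇑ψ)) := by
    simpa [SchwartzMap.fourier_coe] using (SchwartzMap.fourierTransformCLM ℂ ψ).integrable
  have h : (fun ω : ℝ => FT1 ⇑ψ (a * ω))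
      = fun ω => 𝓕 (⇑ψ) ((a / (2 * π)) * ω) := by
    funext ω
    rw [FT1_eq_fourierIntegral]
    ring_nf
  rw [h]
  exact h1.comp_mul_left' (by positivity)

lemma key_inversion (ψ : SchwartzMap ℝ ℂ) {a : ℝ} (ha : 0 < a) (s : ℝ) :
    ∫ ω : ℝ, Complex.exp (Complex.I * ((ω * s : ℝ) : ℂ)) * FT1 ⇑ψ (a * ω)
      = ((2 * π : ℝ) : ℂ) * ((a : ℂ)⁻¹ * ψ (s / a)) := by
  have hπ : (0:ℝ) < 2 * π := by positivity
  set c : ℝ := a / (2 * π) with hc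
  have hcpos : 0 < c := by positivity
  have h1 : ∀ ω : ℝ, Complex.exp (Complex.I * ((ω * s : ℝ) : ℂ)) * FT1 ⇑ψ (a * ω)
      = (fun w : ℝ => Complex.exp (((2 * π * (w * (s / a)) : ℝ) : ℂ) * Complex.I)
          • 𝓕 (⇑ψ) w) (c * ω) := by
    intro ω
    simp only [smul_eq_mul]
    rw [FT1_eq_fourierIntegral]
    have e1 : a * ω / (2 * π) = c * ω := by rw [hc]; ring
    rw [e1]
    congr 1
    have e2 : 2 * π * (c * ω * (s / a)) = ω * s := by
      rw [hc]; field_simp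
    rw [e2]
    ring
  calc ∫ ω : ℝ, Complex.exp (Complex.I * ((ω * s : ℝ) : ℂ)) * FT1 ⇑ψ (a * ω)
      = ∫ ω : ℝ, (fun w : ℝ => Complex.exp (((2 * π * (w * (s / a)) : ℝ) : ℂ) * Complex.I)
          • 𝓕 (⇑ψ) w) (c * ω) := by
        exact integral_congr_ae (.of_forall h1)
    _ = |c⁻¹| • ∫ w : ℝ, Complex.exp (((2 * π * (w * (s / a)) : ℝ) : ℂ) * Complex.I)
          • 𝓕 (⇑ψ) w := by
        exact MeasureTheory.Measure.integral_comp_mul_left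
          (fun w : ℝ => Complex.exp (((2 * π * (w * (s / a)) : ℝ) : ℂ) * Complex.I)
            • 𝓕 (⇑ψ) w) c
    _ = ((2 * π : ℝ) : ℂ) * ((a : ℂ)⁻¹ * ψ (s / a)) := by
        rw [schwartz_fourier_inversion' ψ (s / a)]
        rw [abs_of_pos (inv_pos.2 hcpos), hc]
        rw [Complex.real_smul]
        push_cast [ne_of_gt ha, ne_of_gt Real.pi_pos]
        field_simp


lemma core_fubini_inversion (ψ : SchwartzMap ℝ ℂ) (f : ℝ → ℂ) (hfc : Continuous f)
    (hfi : Integrable f) {a : ℝ} (ha : 0 < a) (t : ℝ) (d : ℂ) :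
    ((2 * π : ℝ) : ℂ)⁻¹ * ∫ ω : ℝ, Complex.exp (Complex.I * ((ω * t : ℝ) : ℂ)) *
          (∫ b : ℝ, f b * Complex.exp (-(Complex.I * ((b * ω : ℝ) : ℂ)))) * FT1 ⇑ψ (a * ω) * d
      = ∫ b : ℝ, f b * ((a : ℂ)⁻¹ * ψ ((t - b) / a)) * d := by
  have hπ : ((2 * π : ℝ) : ℂ) ≠ 0 := by
    simp [Real.pi_ne_zero]
  have hsplit : ∀ ω b : ℝ, Complex.exp (Complex.I * ((ω * (t - b) : ℝ) : ℂ))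
      = Complex.exp (Complex.I * ((ω * t : ℝ) : ℂ)) *
        Complex.exp (-(Complex.I * ((b * ω : ℝ) : ℂ))) := by
    intro ω b
    rw [← Complex.exp_add]
    congr 1
    push_cast
    ring
  have hF := FT1_schwartz_scaled_integrable ψ ha
  have hFc := FT1_schwartz_continuous ψ
  set G : ℝ → ℝ → ℂ := fun ω b =>
    f b * Complex.exp (Complex.I * ((ω * (t - b) : ℝ) : ℂ)) * FT1 ⇑ψ (a * ω) * d with hG
  have hprod : Integrable (Function.uncurry G) (volume.prod volume) := by
    have h0 : Integrable (fun p : ℝ × ℝ => (FT1 ⇑ψ (a * p.1) * d) * f p.2)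
        (volume.prod volume) := (hF.mul_const d).mul_prod hfi
    refine h0.norm.mono' ?_ (.of_forall fun p => ?_)
    · apply Continuous.aestronglyMeasurable
      refine ((Continuous.mul ?_ ?_).mul ?_).mul continuous_const
      · exact hfc.comp continuous_snd
      · exact Complex.continuous_exp.comp (by continuity)
      · exact hFc.comp (continuous_const.mul continuous_fst)
    · have h1 : ‖Complex.exp (Complex.I * ((p.1 * (t - p.2) : ℝ) : ℂ))‖ = 1 := by
        rw [mul_comm]
        exact Complex.norm_exp_ofReal_mul_I _
      simp only [Function.uncurry, hG, norm_mul, h1]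
      exact le_of_eq (by ring)
  calc ((2 * π : ℝ) : ℂ)⁻¹ * ∫ ω : ℝ, Complex.exp (Complex.I * ((ω * t : ℝ) : ℂ)) *
          (∫ b : ℝ, f b * Complex.exp (-(Complex.I * ((b * ω : ℝ) : ℂ)))) * FT1 ⇑ψ (a * ω) * d
      = ((2 * π : ℝ) : ℂ)⁻¹ * ∫ ω : ℝ, ∫ b : ℝ, G ω b := by
        congr 1
        refine integral_congr_ae (.of_forall fun ω => ?_)
        have h2 : ∀ b : ℝ, G ω b = (f b * Complex.exp (-(Complex.I * ((b * ω : ℝ) : ℂ)))) *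
            (Complex.exp (Complex.I * ((ω * t : ℝ) : ℂ)) * (FT1 ⇑ψ (a * ω) * d)) := by
          intro b
          rw [hG]
          simp only []
          rw [hsplit ω b]
          ring
        simp_rw [h2, integral_mul_const]
        ring
    _ = ((2 * π : ℝ) : ℂ)⁻¹ * ∫ b : ℝ, ∫ ω : ℝ, G ω b := by
        rw [integral_integral_swap hprod]
    _ = ∫ b : ℝ, f b * ((a : ℂ)⁻¹ * ψ ((t - b) / a)) * d := by
        rw [← MeasureTheory.integral_const_mul]
        refine integral_congr_ae (.of_forall fun b => ?_)
        have h3 : ∀ ω : ℝ, G ω b = (f b * d) *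
            (Complex.exp (Complex.I * ((ω * (t - b) : ℝ) : ℂ)) * FT1 ⇑ψ (a * ω)) := by
          intro ω
          rw [hG]
          ring
        simp_rw [h3, MeasureTheory.integral_const_mul]
        rw [key_inversion ψ ha (t - b)]
        have h4 : ((2 * π : ℝ) : ℂ)⁻¹ * ((2 * π : ℝ) : ℂ) = 1 := inv_mul_cancel₀ hπ
        calc ((2 * π : ℝ) : ℂ)⁻¹ * (f b * d * (((2 * π : ℝ) : ℂ) * ((a : ℂ)⁻¹ * ψ ((t - b) / a))))
            = (((2 * π : ℝ) : ℂ)⁻¹ * ((2 * π : ℝ) : ℂ)) *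
              (f b * ((a : ℂ)⁻¹ * ψ ((t - b) / a)) * d) := by ring
          _ = f b * ((a : ℂ)⁻¹ * ψ ((t - b) / a)) * d := by rw [h4, one_mul]

end Helpers

/-- Fourier representation of the ridgelet synthesis operator:
R^t_ψΦ(x) = (1/(2π)) ∫_{𝕊^{n-1}} ∫₀^∞ ∫_ℝ e^{iω(u·x)} Φ̂(u,ω,a) ψ̂(aω) a^{−n} dω da du,
with Φ̂ the Fourier transform of Φ in the variable b. -/
theorem ridgelet_synthesis_fourier_formula
    (n : ℕ) (hn : 2 ≤ n) (ψ : SchwartzMap ℝ ℂ)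
    (Φ : Sph n → ℝ → ℝ → ℂ) (hΦ : RapidDecay Φ) :
    ∀ x : En n, RTsynth ⇑ψ Φ x = ((2 * π : ℝ) : ℂ)⁻¹ *
      ∫ u : Sph n, (∫ a in Ioi (0:ℝ), (∫ ω : ℝ,
          Complex.exp (Complex.I * (ω * (inner ℝ (u : En n) x : ℝ) : ℝ)) *
            (∫ b : ℝ, Φ u b a * Complex.exp (-(Complex.I * (b * ω : ℝ)))) *
            FT1 ⇑ψ (a * ω) * ((a ^ n : ℝ) : ℂ)⁻¹))
        ∂(sphMeasure n) := by
  intro x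
  unfold RTsynth
  rw [← MeasureTheory.integral_const_mul]
  refine integral_congr_ae (.of_forall fun u => ?_)
  dsimp only
  rw [← MeasureTheory.integral_const_mul]
  refine setIntegral_congr_fun measurableSet_Ioi fun a ha => ?_
  have ha' : 0 < a := ha
  set f : ℝ → ℂ := fun b => Φ u b a with hf
  set t : ℝ := (inner ℝ x (u : En n) : ℝ) with htdef
  have ht : (inner ℝ (u : En n) x : ℝ) = t := real_inner_comm _ _
  have hfc : Continuous f := by
    have hmaps : MapsTo (fun b : ℝ => ((u, (b, a)) : Sph n × ℝ × ℝ))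
        univ (univ ×ˢ univ ×ˢ Ioi 0) := fun b _ => ⟨mem_univ _, mem_univ _, ha'⟩
    have hcomp := hΦ.cont.comp (Continuous.continuousOn (by continuity)) hmaps
    exact continuousOn_univ.mp hcomp
  have hfi : Integrable f := by
    obtain ⟨C, hC⟩ := hΦ.decay 0 2
    have hb : ∀ b : ℝ, ‖f b‖ ≤ C / 2 * (1 + b ^ 2)⁻¹ := by
      intro b
      have h := hC u b a ha'
      have e : (a ^ 0 + (a ^ 0)⁻¹ : ℝ) = 2 := by norm_num
      have e2 : ((1 : ℝ) + b ^ 2) ^ (((2 : ℕ) : ℝ) / 2) = 1 + b ^ 2 := by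
        rw [show ((2 : ℕ) : ℝ) / 2 = 1 by norm_num, Real.rpow_one]
      rw [e, e2] at h
      have hpos : (0 : ℝ) < 1 + b ^ 2 := by positivity
      have h5 : ‖f b‖ * (2 * (1 + b ^ 2)) ≤ C := by nlinarith [h]
      calc ‖f b‖ ≤ C / (2 * (1 + b ^ 2)) := (le_div_iff₀ (by positivity)).2 h5
        _ = C / 2 * (1 + b ^ 2)⁻¹ := by
            field_simp
    exact Integrable.mono' (integrable_inv_one_add_sq.const_mul (C / 2))
      hfc.aestronglyMeasurable (.of_forall hb)
  have hc := core_fubini_inversion ψ f hfc hfi ha' t (((a ^ n : ℝ) : ℂ)⁻¹)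
  simp only [ridgelet, ht]
  exact hc.symm
end
end
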